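/- Let X₁, X₂ : ℝ³ → ℝ³ be smooth vector fields, let (q,u) be an admissible pair on [0,T] whose trajectory q is time-optimal, and let λ be an extremal lift of (q,u). If φ₁₂(t) ≠ 0 for all t ∈ [0,T], then there is no nontrivial subinterval of [0,T] on which φ₁ vanishes identically, and there is no nontrivial subinterval of [0,T] on which φ₂ vanishes identically. In particular, the trajectory has no singular arcs. -/

import Mathlib

open MeasureTheory Set
open scoped RealInnerProductSpace

noncomputable section

/-- The state space `ℝ³`, with its Euclidean inner product. -/
abbrev E3 : Type := EuclideanSpace ℝ (Fin 3)

/-- Lie bracket of vector fields: `[X,Y] = DY·X − DX·Y`. -/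
def lieBracketVF {E : Type*} [NormedAddCommGroup E] [NormedSpace ℝ E]
    (X Y : E → E) : E → E :=
  fun x => fderiv ℝ Y x (X x) - fderiv ℝ X x (Y x)

/-- `X₁₂ = [X₁, X₂]`. -/
def X12 (X₁ X₂ : E3 → E3) : E3 → E3 := lieBracketVF X₁ X₂

/-- `X₊₁₂ = [X₁ + X₂, X₁₂]`. -/
def Xp12 (X₁ X₂ : E3 → E3) : E3 → E3 :=
  lieBracketVF (fun x => X₁ x + X₂ x) (X12 X₁ X₂)

/-- `X₋₁₂ = [X₁ − X₂, X₁₂]`. -/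
def Xm12 (X₁ X₂ : E3 → E3) : E3 → E3 :=
  lieBracketVF (fun x => X₁ x - X₂ x) (X12 X₁ X₂)

/-- An admissible pair on `[0,T]`: a measurable control `u = (u₁,u₂)` with values in
`[−1,1]²` together with an absolutely continuous trajectory `q` (encoded by the
integral representation) satisfying `q' = u₁X₁(q) + u₂X₂(q)` a.e. on `[0,T]`. -/
def IsAdmissiblePair (X₁ X₂ : E3 → E3) (T : ℝ) (q : ℝ → E3) (u : ℝ → ℝ × ℝ) : Prop :=
  0 ≤ T ∧ Measurable u ∧ (∀ t ∈ Icc (0:ℝ) T, |(u t).1| ≤ 1 ∧ |(u t).2| ≤ 1) ∧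
    IntegrableOn (fun s => (u s).1 • X₁ (q s) + (u s).2 • X₂ (q s)) (Icc 0 T) ∧
    ∀ t ∈ Icc (0:ℝ) T,
      q t = q 0 + ∫ s in Icc (0:ℝ) t, ((u s).1 • X₁ (q s) + (u s).2 • X₂ (q s))

/-- A trajectory `q` on `[0,T]` is time-optimal if no admissible pair on a
shorter interval `[0,T'']` joins `q 0` to `q T`. -/
def IsTimeOptimal (X₁ X₂ : E3 → E3) (T : ℝ) (q : ℝ → E3) : Prop :=
  ¬ ∃ (T'' : ℝ) (q' : ℝ → E3) (u' : ℝ → ℝ × ℝ),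
      T'' < T ∧ IsAdmissiblePair X₁ X₂ T'' q' u' ∧ q' 0 = q 0 ∧ q' T'' = q T

/-- Right-hand side of the adjoint equation: `−(Dₓ(u₁X₁ + u₂X₂)(q t))ᵀ λ(t)`. -/
def adjVec (X₁ X₂ : E3 → E3) (u : ℝ → ℝ × ℝ) (q lam : ℝ → E3) (t : ℝ) : E3 :=
  -(ContinuousLinearMap.adjoint
      ((u t).1 • fderiv ℝ X₁ (q t) + (u t).2 • fderiv ℝ X₂ (q t)) (lam t))

/-- An extremal lift of an admissible pair `(q,u)` on `[0,T]`: a nonvanishing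
absolutely continuous solution of the adjoint equation satisfying the
maximality condition of the PMP a.e. -/
def IsExtremalLift (X₁ X₂ : E3 → E3) (T : ℝ) (q : ℝ → E3) (u : ℝ → ℝ × ℝ)
    (lam : ℝ → E3) : Prop :=
  (∀ t ∈ Icc (0:ℝ) T, lam t ≠ 0) ∧
    IntegrableOn (adjVec X₁ X₂ u q lam) (Icc 0 T) ∧
    (∀ t ∈ Icc (0:ℝ) T, lam t = lam 0 + ∫ s in Icc (0:ℝ) t, adjVec X₁ X₂ u q lam s) ∧
    ∀ᵐ t ∂volume, t ∈ Icc (0:ℝ) T →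
      (u t).1 * ⟪lam t, X₁ (q t)⟫ + (u t).2 * ⟪lam t, X₂ (q t)⟫ =
        |⟪lam t, X₁ (q t)⟫| + |⟪lam t, X₂ (q t)⟫|

/-- The switching function `t ↦ ⟨λ(t), X(q(t))⟩` associated with a vector field `X`. -/
def phiF (X : E3 → E3) (q lam : ℝ → E3) (t : ℝ) : ℝ := ⟪lam t, X (q t)⟫

/-- `(a,b)` is a bang arc: a maximal open subinterval of `[0,T]` on which both
`φ₁` and `φ₂` are nonvanishing. -/
def IsBangArc (T : ℝ) (φ₁ φ₂ : ℝ → ℝ) (a b : ℝ) : Prop :=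
  0 ≤ a ∧ a < b ∧ b ≤ T ∧ (∀ t ∈ Ioo a b, φ₁ t ≠ 0 ∧ φ₂ t ≠ 0) ∧
    ∀ a' b', 0 ≤ a' → a' ≤ a → b ≤ b' → b' ≤ T →
      (∀ t ∈ Ioo a' b', φ₁ t ≠ 0 ∧ φ₂ t ≠ 0) → a' = a ∧ b' = b

/-- `(a,b)` is a `u₁`-singular arc: a maximal open subinterval of `[0,T]` on which
`φ₁` vanishes identically and `φ₂` is nonvanishing. -/
def IsU1SingularArc (T : ℝ) (φ₁ φ₂ : ℝ → ℝ) (a b : ℝ) : Prop :=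
  0 ≤ a ∧ a < b ∧ b ≤ T ∧ (∀ t ∈ Ioo a b, φ₁ t = 0 ∧ φ₂ t ≠ 0) ∧
    ∀ a' b', 0 ≤ a' → a' ≤ a → b ≤ b' → b' ≤ T →
      (∀ t ∈ Ioo a' b', φ₁ t = 0 ∧ φ₂ t ≠ 0) → a' = a ∧ b' = b

/-- `(a,b)` is a `u₂`-singular arc. -/
def IsU2SingularArc (T : ℝ) (φ₁ φ₂ : ℝ → ℝ) (a b : ℝ) : Prop :=
  0 ≤ a ∧ a < b ∧ b ≤ T ∧ (∀ t ∈ Ioo a b, φ₂ t = 0 ∧ φ₁ t ≠ 0) ∧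
    ∀ a' b', 0 ≤ a' → a' ≤ a → b ≤ b' → b' ≤ T →
      (∀ t ∈ Ioo a' b', φ₂ t = 0 ∧ φ₁ t ≠ 0) → a' = a ∧ b' = b

/-- A singular arc is a `u₁`- or `u₂`-singular arc. -/
def IsSingularArc (T : ℝ) (φ₁ φ₂ : ℝ → ℝ) (a b : ℝ) : Prop :=
  IsU1SingularArc T φ₁ φ₂ a b ∨ IsU2SingularArc T φ₁ φ₂ a b

/-- A switching time: a point of `(0,T)` separating two bang arcs. -/
def IsSwitchingTime (T : ℝ) (φ₁ φ₂ : ℝ → ℝ) (τ : ℝ) : Prop :=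
  ∃ a b, IsBangArc T φ₁ φ₂ a τ ∧ IsBangArc T φ₁ φ₂ τ b

/-- The scalar control `ui` switches at the switching time `τ`: it is a.e. equal to
a constant of modulus 1 on a left neighborhood of `τ` and to the opposite constant
on a right neighborhood of `τ`. -/
def SwitchesAt (T : ℝ) (φ₁ φ₂ : ℝ → ℝ) (ui : ℝ → ℝ) (τ : ℝ) : Prop :=
  IsSwitchingTime T φ₁ φ₂ τ ∧ ∃ c : ℝ, |c| = 1 ∧ ∃ ε > 0,
    (∀ᵐ t ∂volume, t ∈ Ioo (τ - ε) τ → ui t = c) ∧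
    (∀ᵐ t ∂volume, t ∈ Ioo τ (τ + ε) → ui t = -c)

/-- The trajectory is bang-bang: `[0,T]` is the union of the closures of finitely
many bang arcs. -/
def IsBangBang (T : ℝ) (φ₁ φ₂ : ℝ → ℝ) : Prop :=
  ∃ (n : ℕ) (a b : Fin n → ℝ), (∀ i, IsBangArc T φ₁ φ₂ (a i) (b i)) ∧
    Icc (0:ℝ) T = ⋃ i, Icc (a i) (b i)



section AuxLemmas
open Filter Topology

variable {E : Type*} [NormedAddCommGroup E] [NormedSpace ℝ E] [CompleteSpace E]

theorem hasDerivAt_primitive_of_lebesgue {f : ℝ → E} (hf : Integrable f) {x : ℝ}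
    (key : Tendsto (fun y : ℝ => ⨍ s in Metric.closedBall x (dist y x), ‖f s - f x‖)
      (𝓝[≠] x) (𝓝 0)) :
    HasDerivAt (fun t => ∫ s in (0:ℝ)..t, f s) (f x) x := by
  rw [hasDerivAt_iff_tendsto]
  set F := fun t => ∫ s in (0:ℝ)..t, f s with hF
  set h := fun y => ‖y - x‖⁻¹ * ‖F y - F x - (y - x) • f x‖ with hh
  have hbound : ∀ y : ℝ, y ≠ x →
      h y ≤ 2 * ⨍ s in Metric.closedBall x (dist y x), ‖f s - f x‖ := by
    intro y hy
    have hsub : F y - F x = ∫ s in x..y, f s :=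
      intervalIntegral.integral_interval_sub_left hf.intervalIntegrable hf.intervalIntegrable
    have hconst : (y - x) • f x = ∫ s in x..y, f x := by
      simp [intervalIntegral.integral_const]
    have hdiff : F y - F x - (y - x) • f x = ∫ s in x..y, (f s - f x) := by
      rw [hsub, hconst, intervalIntegral.integral_sub hf.intervalIntegrable
        intervalIntegrable_const]
    have hr : (0:ℝ) < dist y x := dist_pos.2 hy
    have hd : dist y x = |y - x| := Real.dist_eq y x
    have hsubset : Set.uIoc x y ⊆ Metric.closedBall x (dist y x) := by
      intro s hs
      have h1 : (min x y) < s := hs.1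
      have h2 : s ≤ max x y := hs.2
      have e1 := le_abs_self (y - x)
      have e2 := neg_abs_le (y - x)
      have e3 := abs_nonneg (y - x)
      have m1 : x - |y - x| ≤ min x y := le_min (by linarith) (by linarith)
      have m2 : max x y ≤ x + |y - x| := max_le (by linarith) (by linarith)
      rw [Real.closedBall_eq_Icc, Set.mem_Icc, hd]
      constructor <;> linarith
    have hnorm : ‖∫ s in x..y, (f s - f x)‖ ≤
        ∫ s in Metric.closedBall x (dist y x), ‖f s - f x‖ := by
      refine le_trans intervalIntegral.norm_integral_le_integral_norm_uIoc ?_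
      apply setIntegral_mono_set
      · exact ((hf.integrableOn.sub (integrableOn_const
          measure_closedBall_lt_top.ne)).norm)
      · filter_upwards with s using norm_nonneg _
      · exact hsubset.eventuallyLE
    have hvol : (volume (Metric.closedBall x (dist y x))).toReal = 2 * dist y x := by
      rw [Real.volume_closedBall, ENNReal.toReal_ofReal (by linarith)]
    have havg : ∫ s in Metric.closedBall x (dist y x), ‖f s - f x‖ =
        (2 * dist y x) * ⨍ s in Metric.closedBall x (dist y x), ‖f s - f x‖ := by
      rw [setAverage_eq, measureReal_def, hvol, smul_eq_mul, ← mul_assoc,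
        mul_inv_cancel₀ (by positivity), one_mul]
    have hne : |y - x| ≠ 0 := by rw [← hd]; positivity
    have hyx : h y = ‖y - x‖⁻¹ * ‖F y - F x - (y - x) • f x‖ := rfl
    rw [hyx, hdiff]
    calc ‖y - x‖⁻¹ * ‖∫ s in x..y, (f s - f x)‖
        ≤ ‖y - x‖⁻¹ * ((2 * dist y x) * ⨍ s in Metric.closedBall x (dist y x), ‖f s - f x‖) := by
          rw [← havg]
          exact mul_le_mul_of_nonneg_left hnorm (by positivity)
      _ = 2 * ⨍ s in Metric.closedBall x (dist y x), ‖f s - f x‖ := by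
          rw [Real.norm_eq_abs, ← hd]
          field_simp
  have h0 : Tendsto h (𝓝[≠] x) (𝓝 0) := by
    apply squeeze_zero'
      (by filter_upwards [self_mem_nhdsWithin] with y _; positivity)
      (by filter_upwards [self_mem_nhdsWithin] with y hy; exact hbound y hy)
    simpa using key.const_mul 2
  have hx0 : h x = 0 := by simp [hh]
  rw [← nhdsNE_sup_pure x, tendsto_sup]
  exact ⟨h0, by rw [← hx0]; exact tendsto_pure_nhds h x⟩

theorem ae_hasDerivAt_primitive {f : ℝ → E} (hf : Integrable f) :
    ∀ᵐ x ∂volume, HasDerivAt (fun t => ∫ s in (0:ℝ)..t, f s) (f x) x := by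
  have hloc : LocallyIntegrable f volume := hf.locallyIntegrable
  filter_upwards [IsUnifLocDoublingMeasure.ae_tendsto_average_norm_sub (μ := volume) hloc 1]
    with x hx
  refine hasDerivAt_primitive_of_lebesgue hf ?_
  apply hx (fun _ => x) (fun y => dist y x)
  · refine tendsto_nhdsWithin_of_tendsto_nhds_of_eventually_within _ ?_ ?_
    · have : Tendsto (fun y : ℝ => dist y x) (𝓝 x) (𝓝 (dist x x)) :=
        (continuous_id.dist continuous_const).continuousAt
      simpa [dist_self] using this.mono_left nhdsWithin_le_nhds
    · filter_upwards [self_mem_nhdsWithin] with y hy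
      simpa [dist_pos] using hy
  · filter_upwards with y
    simp [dist_nonneg]

theorem ae_hasDerivAt_of_rep {T : ℝ} {f : ℝ → E} (hint : IntegrableOn f (Icc 0 T))
    {q : ℝ → E} (hrep : ∀ t ∈ Icc (0:ℝ) T, q t = q 0 + ∫ s in Icc (0:ℝ) t, f s) :
    ∀ᵐ x ∂volume, x ∈ Ioo (0:ℝ) T → HasDerivAt q (f x) x := by
  set fb := (Icc (0:ℝ) T).indicator f with hfb
  have hfb_int : Integrable fb := (integrable_indicator_iff measurableSet_Icc).2 hint
  filter_upwards [ae_hasDerivAt_primitive hfb_int] with x hx hxmem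
  have hxIcc : x ∈ Icc (0:ℝ) T := Ioo_subset_Icc_self hxmem
  have heq : ∀ t ∈ Icc (0:ℝ) T, q t = q 0 + ∫ s in (0:ℝ)..t, fb s := by
    intro t ht
    rw [hrep t ht]
    congr 1
    rw [intervalIntegral.integral_of_le ht.1, hfb,
      setIntegral_indicator measurableSet_Icc, integral_Icc_eq_integral_Ioc]
    congr 1
    rw [Set.inter_eq_left.2 (fun s hs => Set.mem_Icc.2
      ⟨le_of_lt (Set.mem_Ioc.1 hs).1, le_trans (Set.mem_Ioc.1 hs).2 ht.2⟩)]
  have hev : q =ᶠ[𝓝 x] fun t => q 0 + ∫ s in (0:ℝ)..t, fb s := by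
    filter_upwards [isOpen_Ioo.mem_nhds hxmem] with t ht using heq t (Ioo_subset_Icc_self ht)
  have hd : HasDerivAt (fun t => q 0 + ∫ s in (0:ℝ)..t, fb s) (fb x) x := hx.const_add (q 0)
  have hd' : HasDerivAt q (fb x) x := hd.congr_of_eventuallyEq hev
  rwa [hfb, Set.indicator_of_mem hxIcc] at hd'

theorem continuousOn_of_rep {T : ℝ} {f : ℝ → E} (hint : IntegrableOn f (Icc 0 T))
    {q : ℝ → E} (hrep : ∀ t ∈ Icc (0:ℝ) T, q t = q 0 + ∫ s in Icc (0:ℝ) t, f s) :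
    ContinuousOn q (Icc 0 T) := by
  have h : ContinuousOn (fun t => q 0 + ∫ s in Icc (0:ℝ) t, f s) (Icc 0 T) :=
    continuousOn_const.add (intervalIntegral.continuousOn_primitive_Icc hint)
  exact h.congr hrep

theorem eq_zero_on_Ioo_of_ae {φ : ℝ → ℝ} {a b : ℝ} (hcont : ContinuousOn φ (Ioo a b))
    (hae : ∀ᵐ s ∂(volume : Measure ℝ), s ∈ Ioo a b → φ s = 0) : ∀ t ∈ Ioo a b, φ t = 0 := by
  intro t ht
  by_contra hne
  have hca : ContinuousAt φ t := hcont.continuousAt (isOpen_Ioo.mem_nhds ht)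
  have h1 : ∀ᶠ s in 𝓝 t, φ s ≠ 0 := hca.eventually_ne hne
  have h2 : ∀ᶠ s in 𝓝 t, s ∈ Ioo a b := isOpen_Ioo.mem_nhds ht
  obtain ⟨U, hUsub, hUopen, htU⟩ := mem_nhds_iff.1 (h1.and h2)
  have hU0 : volume U = 0 := by
    refine measure_mono_null (fun s hs => ?_) (ae_iff.1 hae)
    intro h
    exact (hUsub hs).1 (h (hUsub hs).2)
  exact (hUopen.measure_pos volume ⟨t, htU⟩).ne' hU0

theorem deriv_zero_of_vanish {φ : ℝ → ℝ} {a b x c : ℝ} (hz : ∀ t ∈ Ioo a b, φ t = 0)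
    (hx : x ∈ Ioo a b) (hd : HasDerivAt φ c x) : c = 0 := by
  have hev : φ =ᶠ[𝓝 x] fun _ => 0 := by
    filter_upwards [isOpen_Ioo.mem_nhds hx] with t ht using hz t ht
  have h0 : HasDerivAt φ (0:ℝ) x := (hasDerivAt_const x (0:ℝ)).congr_of_eventuallyEq hev
  exact hd.unique h0

theorem ae_zero_of_vanish {T a b : ℝ} (ha : 0 ≤ a) (hbT : b ≤ T) {φ φ12 c : ℝ → ℝ}
    (hder : ∀ᵐ x ∂(volume : Measure ℝ), x ∈ Ioo (0:ℝ) T → HasDerivAt φ (c x * φ12 x) x)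
    (h12 : ∀ x ∈ Icc (0:ℝ) T, φ12 x ≠ 0) (hvan : ∀ t ∈ Ioo a b, φ t = 0) :
    ∀ᵐ x ∂(volume : Measure ℝ), x ∈ Ioo a b → c x = 0 := by
  filter_upwards [hder] with x hx hxab
  have hx0T : x ∈ Ioo (0:ℝ) T := ⟨lt_of_le_of_lt ha hxab.1, lt_of_lt_of_le hxab.2 hbT⟩
  have h := deriv_zero_of_vanish hvan hxab (hx hx0T)
  exact (mul_eq_zero.1 h).resolve_right (h12 x (Ioo_subset_Icc_self hx0T))

end AuxLemmas

section Aux3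
open Filter Topology

theorem hasDerivAt_phiF {X : E3 → E3} (hX : ContDiff ℝ (⊤ : ℕ∞) X) {q lam : ℝ → E3} {x : ℝ}
    {v w : E3} (hq : HasDerivAt q v x) (hl : HasDerivAt lam w x) :
    HasDerivAt (phiF X q lam) (⟪lam x, fderiv ℝ X (q x) v⟫ + ⟪w, X (q x)⟫) x := by
  have hXd : HasFDerivAt X (fderiv ℝ X (q x)) (q x) :=
    (hX.differentiable (by simp) (q x)).hasFDerivAt
  have hXq : HasDerivAt (fun t => X (q t)) (fderiv ℝ X (q x) v) x := hXd.comp_hasDerivAt x hq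
  exact hl.inner (𝕜 := ℝ) hXq

theorem adj_inner₁ (X₁ X₂ : E3 → E3) (u : ℝ → ℝ × ℝ) (q lam : ℝ → E3) (x : ℝ) :
    ⟪lam x, fderiv ℝ X₁ (q x) ((u x).1 • X₁ (q x) + (u x).2 • X₂ (q x))⟫ +
      ⟪adjVec X₁ X₂ u q lam x, X₁ (q x)⟫ =
      (-(u x).2) * phiF (X12 X₁ X₂) q lam x := by
  simp only [adjVec, X12, lieBracketVF, phiF, inner_neg_left, inner_add_left,
    ContinuousLinearMap.adjoint_inner_left, ContinuousLinearMap.add_apply,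
    ContinuousLinearMap.smul_apply, ContinuousLinearMap.coe_smul', Pi.smul_apply,
    map_add, ContinuousLinearMap.map_smul,
    inner_add_right, inner_sub_right, real_inner_smul_right, inner_smul_right]
  ring

theorem adj_inner₂ (X₁ X₂ : E3 → E3) (u : ℝ → ℝ × ℝ) (q lam : ℝ → E3) (x : ℝ) :
    ⟪lam x, fderiv ℝ X₂ (q x) ((u x).1 • X₁ (q x) + (u x).2 • X₂ (q x))⟫ +
      ⟪adjVec X₁ X₂ u q lam x, X₂ (q x)⟫ =
      (u x).1 * phiF (X12 X₁ X₂) q lam x := by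
  simp only [adjVec, X12, lieBracketVF, phiF, inner_neg_left, inner_add_left,
    ContinuousLinearMap.adjoint_inner_left, ContinuousLinearMap.add_apply,
    ContinuousLinearMap.smul_apply, ContinuousLinearMap.coe_smul', Pi.smul_apply,
    map_add, ContinuousLinearMap.map_smul,
    inner_add_right, inner_sub_right, real_inner_smul_right, inner_smul_right]
  ring

theorem cut_not_timeOptimal (X₁ X₂ : E3 → E3) (T : ℝ) (q : ℝ → E3) (u : ℝ → ℝ × ℝ)
    (hadm : IsAdmissiblePair X₁ X₂ T q u) {a b : ℝ} (ha : 0 ≤ a) (hab : a < b) (hbT : b ≤ T)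
    (hz : ∀ᵐ s ∂(volume : Measure ℝ), s ∈ Ioo a b →
      (u s).1 • X₁ (q s) + (u s).2 • X₂ (q s) = 0) :
    ¬ IsTimeOptimal X₁ X₂ T q := by
  obtain ⟨hT0, humeas, hubound, hfint, hqrep⟩ := hadm
  set f : ℝ → E3 := fun s => (u s).1 • X₁ (q s) + (u s).2 • X₂ (q s) with hfdef
  set d := b - a with hd
  set T'' := T - d with hT''
  have hd0 : 0 < d := by rw [hd]; linarith
  have haT'' : a ≤ T'' := by rw [hT'', hd]; linarith
  have hT''T : T'' < T := by rw [hT'']; linarith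
  have hT''0 : 0 ≤ T'' := le_trans ha haT''
  set σ : ℝ → ℝ := fun t => if t ≤ a then t else t + d with hσdef
  have hσ1 : ∀ s, s ≤ a → σ s = s := fun s hs => if_pos hs
  have hσ2 : ∀ s, a < s → σ s = s + d := fun s hs => if_neg (not_le.2 hs)
  have hσmeas : Measurable σ := by
    apply Measurable.ite (measurableSet_le measurable_id measurable_const) measurable_id
    exact measurable_id.add_const d
  have hσmem : ∀ t ∈ Icc (0:ℝ) T'', σ t ∈ Icc (0:ℝ) T := by
    intro t ht
    by_cases h : t ≤ a
    · rw [hσ1 t h]; exact ⟨ht.1, by linarith [ht.2]⟩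
    · rw [hσ2 t (not_le.1 h)]
      constructor
      · linarith [ht.1]
      · have := ht.2; rw [hT''] at this; linarith
  have hfint' : ∀ s, s ⊆ Icc (0:ℝ) T → IntegrableOn f s := fun s hs => hfint.mono_set hs
  have hIab0 : ∫ s in Ioc a b, f s = 0 := by
    rw [integral_Ioc_eq_integral_Ioo,
      setIntegral_congr_ae measurableSet_Ioo (hz.mono fun s h hs => h hs)]
    simp
  have hqsplit : ∀ t, a ≤ t → t ≤ T →
      ∫ s in Icc (0:ℝ) t, f s = (∫ s in Icc (0:ℝ) a, f s) + ∫ s in Ioc a t, f s := by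
    intro t hat htT
    rw [← setIntegral_union ((Set.Iic_disjoint_Ioc le_rfl).mono Set.Icc_subset_Iic_self le_rfl)
      measurableSet_Ioc
      (hfint' _ (Set.Icc_subset_Icc le_rfl (by linarith)))
      (hfint' _ (fun s hs => ⟨by linarith [hs.1], le_trans hs.2 htT⟩)),
      Set.Icc_union_Ioc_eq_Icc ha hat]
  have hqba : q b = q a := by
    have hb := hqrep b ⟨by linarith, hbT⟩
    have ha' := hqrep a ⟨ha, by linarith⟩
    rw [hqsplit b hab.le hbT, hIab0, add_zero] at hb
    rw [hb, ha']
  have hint_bT : IntervalIntegrable f volume b T := by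
    rw [intervalIntegrable_iff_integrableOn_Ioc_of_le hbT]
    exact hfint' _ (fun s hs => ⟨by linarith [hs.1], hs.2⟩)
  have hshift : IntervalIntegrable (fun s => f (s + d)) volume a T'' := by
    have h := hint_bT.comp_add_right d
    have e1 : b - d = a := by rw [hd]; ring
    have e2 : T - d = T'' := by rw [hT'']
    rwa [e1, e2] at h
  have hshift_Ioc : IntegrableOn (fun s => f (s + d)) (Ioc a T'') :=
    (intervalIntegrable_iff_integrableOn_Ioc_of_le haT'').1 hshift
  have hfσ1 : IntegrableOn (fun s => f (σ s)) (Icc 0 a) := by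
    refine ((hfint' _ (Set.Icc_subset_Icc le_rfl (by linarith))).congr_fun ?_ measurableSet_Icc)
    intro s hs
    show f s = f (σ s)
    rw [hσ1 s hs.2]
  have hfσ2 : IntegrableOn (fun s => f (σ s)) (Ioc a T'') := by
    refine hshift_Ioc.congr_fun ?_ measurableSet_Ioc
    intro s hs
    show f (s + d) = f (σ s)
    rw [hσ2 s hs.1]
  have hfσ : IntegrableOn (fun s => f (σ s)) (Icc 0 T'') := by
    have hsub : Icc (0:ℝ) T'' ⊆ Icc 0 a ∪ Ioc a T'' := by
      rw [Set.Icc_union_Ioc_eq_Icc ha haT'']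
    exact (hfσ1.union hfσ2).mono_set hsub
  have hshift_int : ∀ t, a ≤ t → t ≤ T'' →
      ∫ s in Ioc a t, f (s + d) = ∫ s in Ioc b (t + d), f s := by
    intro t hat htT
    have hadb : a + d = b := by rw [hd]; ring
    rw [← intervalIntegral.integral_of_le hat, intervalIntegral.integral_comp_add_right f d,
      hadb, intervalIntegral.integral_of_le (by linarith)]
  have hσ0 : σ 0 = 0 := hσ1 0 ha
  have hrep' : ∀ t ∈ Icc (0:ℝ) T'', q (σ t) = q (σ 0) + ∫ s in Icc (0:ℝ) t, f (σ s) := by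
    intro t ht
    rw [hσ0]
    by_cases hta : t ≤ a
    · rw [hσ1 t hta]
      have he : ∫ s in Icc (0:ℝ) t, f (σ s) = ∫ s in Icc (0:ℝ) t, f s :=
        setIntegral_congr_fun measurableSet_Icc (fun s hs => by rw [hσ1 s (le_trans hs.2 hta)])
      rw [he]
      exact hqrep t ⟨ht.1, by linarith [ht.2]⟩
    · push_neg at hta
      rw [hσ2 t hta]
      have htd : t + d ∈ Icc (0:ℝ) T := ⟨by linarith [ht.1], by
        have := ht.2; rw [hT''] at this; linarith⟩
      rw [hqrep (t + d) htd]
      have hR : ∫ s in Icc (0:ℝ) t, f (σ s) =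
          (∫ s in Icc (0:ℝ) a, f s) + ∫ s in Ioc b (t + d), f s := by
        have hsplit : ∫ s in Icc (0:ℝ) t, f (σ s) =
            (∫ s in Icc (0:ℝ) a, f (σ s)) + ∫ s in Ioc a t, f (σ s) := by
          rw [← setIntegral_union
            ((Set.Iic_disjoint_Ioc le_rfl).mono Set.Icc_subset_Iic_self le_rfl)
            measurableSet_Ioc hfσ1
            (hfσ2.mono_set (Set.Ioc_subset_Ioc le_rfl ht.2)),
            Set.Icc_union_Ioc_eq_Icc ha hta.le]
        rw [hsplit,
          setIntegral_congr_fun measurableSet_Icc (fun s hs => by rw [hσ1 s hs.2]),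
          setIntegral_congr_fun (g := fun s => f (s + d)) measurableSet_Ioc
            (fun s hs => by rw [hσ2 s hs.1]),
          hshift_int t hta.le ht.2]
      have hL : ∫ s in Icc (0:ℝ) (t + d), f s =
          (∫ s in Icc (0:ℝ) a, f s) + ((∫ s in Ioc a b, f s) + ∫ s in Ioc b (t + d), f s) := by
        rw [hqsplit (t + d) (by linarith) (by have := ht.2; rw [hT''] at this; linarith)]
        congr 1
        rw [← setIntegral_union (Set.Ioc_disjoint_Ioc_of_le le_rfl) measurableSet_Ioc
          (hfint' _ (fun s hs => ⟨by linarith [hs.1], by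
            have := hs.2; linarith⟩))
          (hfint' _ (fun s hs => ⟨by linarith [hs.1], by
            have h2 := hs.2; have := ht.2; rw [hT''] at this; linarith⟩)),
          Set.Ioc_union_Ioc_eq_Ioc hab.le (by linarith)]
      rw [hL, hR, hIab0, zero_add]
  intro hopt
  apply hopt
  refine ⟨T'', q ∘ σ, u ∘ σ, hT''T, ⟨hT''0, humeas.comp hσmeas,
    fun t ht => hubound (σ t) (hσmem t ht), hfσ, hrep'⟩, ?_, ?_⟩
  · show q (σ 0) = q 0
    rw [hσ0]
  · show q (σ T'') = q T
    by_cases h : T'' ≤ a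
    · have hTb : T = b := by
        have : T - d ≤ a := h
        rw [hd] at this
        linarith [le_antisymm (by linarith : T ≤ b) hbT]
      have hT''a : T'' = a := by rw [hT'', hd, hTb]; ring
      rw [hT''a, hσ1 a le_rfl, ← hqba, hTb]
    · push_neg at h
      rw [hσ2 T'' h]
      have hTd : T'' + d = T := by rw [hT'']; ring
      rw [hTd]

end Aux3

/-- If an extremal lift of a time-optimal trajectory satisfies
`φ₁₂(t) ≠ 0` for all `t ∈ [0,T]`, then neither `φ₁` nor `φ₂` vanishes identically on
a nontrivial subinterval of `[0,T]`; in particular there are no singular arcs. -/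
theorem statement_11 (X₁ X₂ : E3 → E3) (hX₁ : ContDiff ℝ (⊤ : ℕ∞) X₁)
    (hX₂ : ContDiff ℝ (⊤ : ℕ∞) X₂) (T : ℝ) (q : ℝ → E3) (u : ℝ → ℝ × ℝ) (lam : ℝ → E3)
    (hadm : IsAdmissiblePair X₁ X₂ T q u) (hopt : IsTimeOptimal X₁ X₂ T q)
    (hlift : IsExtremalLift X₁ X₂ T q u lam)
    (h12 : ∀ t ∈ Icc (0:ℝ) T, phiF (X12 X₁ X₂) q lam t ≠ 0) :
    (∀ a b : ℝ, 0 ≤ a → a < b → b ≤ T →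
      ¬ ∀ t ∈ Ioo a b, phiF X₁ q lam t = 0) ∧
    (∀ a b : ℝ, 0 ≤ a → a < b → b ≤ T →
      ¬ ∀ t ∈ Ioo a b, phiF X₂ q lam t = 0) ∧
    ¬ ∃ a b : ℝ, IsSingularArc T (phiF X₁ q lam) (phiF X₂ q lam) a b := by
  have hadm' := hadm
  obtain ⟨hT0, humeas, hubound, hfint, hqrep⟩ := hadm'
  obtain ⟨hlne, hgint, hlrep, hmax⟩ := hlift
  have hq' : ∀ᵐ x ∂(volume : Measure ℝ), x ∈ Ioo (0:ℝ) T →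
      HasDerivAt q ((u x).1 • X₁ (q x) + (u x).2 • X₂ (q x)) x :=
    ae_hasDerivAt_of_rep hfint hqrep
  have hl' : ∀ᵐ x ∂(volume : Measure ℝ), x ∈ Ioo (0:ℝ) T →
      HasDerivAt lam (adjVec X₁ X₂ u q lam x) x := ae_hasDerivAt_of_rep hgint hlrep
  have hder1 : ∀ᵐ x ∂(volume : Measure ℝ), x ∈ Ioo (0:ℝ) T →
      HasDerivAt (phiF X₁ q lam) ((-(u x).2) * phiF (X12 X₁ X₂) q lam x) x := by
    filter_upwards [hq', hl'] with x h1 h2 hx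
    have h := hasDerivAt_phiF hX₁ (h1 hx) (h2 hx)
    rwa [adj_inner₁ X₁ X₂ u q lam x] at h
  have hder2 : ∀ᵐ x ∂(volume : Measure ℝ), x ∈ Ioo (0:ℝ) T →
      HasDerivAt (phiF X₂ q lam) (((u x).1) * phiF (X12 X₁ X₂) q lam x) x := by
    filter_upwards [hq', hl'] with x h1 h2 hx
    have h := hasDerivAt_phiF hX₂ (h1 hx) (h2 hx)
    rwa [adj_inner₂ X₁ X₂ u q lam x] at h
  have hqc : ContinuousOn q (Icc 0 T) := continuousOn_of_rep hfint hqrep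
  have hlc : ContinuousOn lam (Icc 0 T) := continuousOn_of_rep hgint hlrep
  have hphic1 : ContinuousOn (phiF X₁ q lam) (Icc 0 T) :=
    hlc.inner (hX₁.continuous.comp_continuousOn hqc)
  have hphic2 : ContinuousOn (phiF X₂ q lam) (Icc 0 T) :=
    hlc.inner (hX₂.continuous.comp_continuousOn hqc)
  have key1 : ∀ a b : ℝ, 0 ≤ a → a < b → b ≤ T →
      ¬ ∀ t ∈ Ioo a b, phiF X₁ q lam t = 0 := by
    intro a b ha hab hbT hvan
    have hIoosub : Ioo a b ⊆ Icc (0:ℝ) T := fun t ht =>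
      ⟨le_of_lt (lt_of_le_of_lt ha ht.1), le_of_lt (lt_of_lt_of_le ht.2 hbT)⟩
    have hu2 : ∀ᵐ x ∂(volume : Measure ℝ), x ∈ Ioo a b → (u x).2 = 0 := by
      filter_upwards [ae_zero_of_vanish (c := fun x => -(u x).2)
        (φ12 := phiF (X12 X₁ X₂) q lam) ha hbT hder1 h12 hvan] with x hx hxab
      exact neg_eq_zero.1 (hx hxab)
    have hphi2ae : ∀ᵐ x ∂(volume : Measure ℝ), x ∈ Ioo a b → phiF X₂ q lam x = 0 := by
      filter_upwards [hu2, hmax] with x h2 hm hxab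
      have hm' := hm (hIoosub hxab)
      have h1 : phiF X₁ q lam x = 0 := hvan x hxab
      have h2' : (u x).2 = 0 := h2 hxab
      simp only [phiF] at h1 ⊢
      rw [h1, h2'] at hm'
      simpa using hm'.symm
    have hphi2 : ∀ t ∈ Ioo a b, phiF X₂ q lam t = 0 :=
      eq_zero_on_Ioo_of_ae (hphic2.mono hIoosub) hphi2ae
    have hu1 : ∀ᵐ x ∂(volume : Measure ℝ), x ∈ Ioo a b → (u x).1 = 0 :=
      ae_zero_of_vanish (c := fun x => (u x).1)
        (φ12 := phiF (X12 X₁ X₂) q lam) ha hbT hder2 h12 hphi2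
    have hz : ∀ᵐ s ∂(volume : Measure ℝ), s ∈ Ioo a b →
        (u s).1 • X₁ (q s) + (u s).2 • X₂ (q s) = 0 := by
      filter_upwards [hu1, hu2] with s h1 h2 hs
      rw [h1 hs, h2 hs]
      simp
    exact cut_not_timeOptimal X₁ X₂ T q u hadm ha hab hbT hz hopt
  have key2 : ∀ a b : ℝ, 0 ≤ a → a < b → b ≤ T →
      ¬ ∀ t ∈ Ioo a b, phiF X₂ q lam t = 0 := by
    intro a b ha hab hbT hvan
    have hIoosub : Ioo a b ⊆ Icc (0:ℝ) T := fun t ht =>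
      ⟨le_of_lt (lt_of_le_of_lt ha ht.1), le_of_lt (lt_of_lt_of_le ht.2 hbT)⟩
    have hu1 : ∀ᵐ x ∂(volume : Measure ℝ), x ∈ Ioo a b → (u x).1 = 0 :=
      ae_zero_of_vanish (c := fun x => (u x).1)
        (φ12 := phiF (X12 X₁ X₂) q lam) ha hbT hder2 h12 hvan
    have hphi1ae : ∀ᵐ x ∂(volume : Measure ℝ), x ∈ Ioo a b → phiF X₁ q lam x = 0 := by
      filter_upwards [hu1, hmax] with x h1 hm hxab
      have hm' := hm (hIoosub hxab)
      have h2 : phiF X₂ q lam x = 0 := hvan x hxab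
      have h1' : (u x).1 = 0 := h1 hxab
      simp only [phiF] at h2 ⊢
      rw [h2, h1'] at hm'
      simpa using hm'.symm
    have hphi1 : ∀ t ∈ Ioo a b, phiF X₁ q lam t = 0 :=
      eq_zero_on_Ioo_of_ae (hphic1.mono hIoosub) hphi1ae
    have hu2 : ∀ᵐ x ∂(volume : Measure ℝ), x ∈ Ioo a b → (u x).2 = 0 := by
      filter_upwards [ae_zero_of_vanish (c := fun x => -(u x).2)
        (φ12 := phiF (X12 X₁ X₂) q lam) ha hbT hder1 h12 hphi1] with x hx hxab
      exact neg_eq_zero.1 (hx hxab)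
    have hz : ∀ᵐ s ∂(volume : Measure ℝ), s ∈ Ioo a b →
        (u s).1 • X₁ (q s) + (u s).2 • X₂ (q s) = 0 := by
      filter_upwards [hu1, hu2] with s h1 h2 hs
      rw [h1 hs, h2 hs]
      simp
    exact cut_not_timeOptimal X₁ X₂ T q u hadm ha hab hbT hz hopt
  refine ⟨key1, key2, ?_⟩
  rintro ⟨a, b, h | h⟩
  · exact key1 a b h.1 h.2.1 h.2.2.1 (fun t ht => (h.2.2.2.1 t ht).1)
  · exact key2 a b h.1 h.2.1 h.2.2.1 (fun t ht => (h.2.2.2.1 t ht).1)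


end
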